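/- Let (φₙ)_{n≥1} be functions on [−1,1] with |φₙ(s)| ≤ 1 for all n and s, let A be a finite index set, and for each a ∈ A let F⁽ᵃ⁾, F̂⁽ᵃ⁾ : ℕ⁺ → ℕ⁺ → ℝ have finite induced infinity norm. Let β > 0, ρ > 0, c > 0 with β > cρ. Assume: (i) the problem is β-separable, i.e. there exists ᾱ with ∑ᵢ |ᾱᵢ| = 1 and ∑ᵢ ᾱᵢ·(∑ⱼ F⁽ᵃ⁾ i j·φⱼ(s)) ≥ β for all s ∈ [−1,1] and a ∈ A; (ii) for every α ∈ ℓ¹ and a ∈ A, the function s ↦ ∑ᵢ αᵢ·(∑ⱼ F⁽ᵃ⁾ i j·φⱼ(s)) is Lipschitz on [−1,1] with constant ρ·∑ᵢ|αᵢ|; (iii) ‖F̂⁽ᵃ⁾ − F⁽ᵃ⁾‖∞ ≤ (β − cρ)/2 for all a ∈ A; and (iv) S̄ ⊆ [−1,1] is such that for every s ∈ [−1,1] there exists s̄ ∈ S̄ with |s − s̄| < c. Then any α̂ minimizing the ℓ¹ norm ∑ᵢ |αᵢ| over the set of α satisfying ∑ᵢ αᵢ·(∑ⱼ F̂⁽ᵃ⁾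 i j·φⱼ(s̄)) ≥ 1 for all s̄ ∈ S̄ and a ∈ A satisfies ∑ᵢ α̂ᵢ·(∑ⱼ F⁽ᵃ⁾ i j·φⱼ(s)) > 0 for all s ∈ [−1,1] and all a ∈ A. -/

import Mathlib

/-- Correctness of the linear program in the IRL algorithm: under `β`-separability, a
`ρ·‖α‖₁`-Lipschitz Bellman criterion, estimation error `‖F̂⁽ᵃ⁾ − F⁽ᵃ⁾‖∞ ≤ (β − cρ)/2`, and a
`c`-covering set `S̄` of `[-1,1]`, any ℓ¹-minimizer `α̂` of the constraints
`α̂ᵀF̂⁽ᵃ⁾φ(s̄) ≥ 1` satisfies `α̂ᵀF⁽ᵃ⁾φ(s) > 0` for all `s ∈ [-1,1]` and all `a`. -/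
theorem stmt_14 {Act : Type*} [Fintype Act]
    (φ : ℕ+ → ℝ → ℝ)
    (hbdd : ∀ (n : ℕ+) (s : ℝ), s ∈ Set.Icc (-1 : ℝ) 1 → |φ n s| ≤ 1)
    (F Fhat : Act → ℕ+ → ℕ+ → ℝ)
    (hFsum : ∀ a, ∀ i : ℕ+, Summable fun j : ℕ+ => |F a i j|)
    (hFhatsum : ∀ a, ∀ i : ℕ+, Summable fun j : ℕ+ => |Fhat a i j|)
    (hFbdd : ∀ a, BddAbove (Set.range fun i : ℕ+ => ∑' j : ℕ+, |F a i j|))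
    (hFhatbdd : ∀ a, BddAbove (Set.range fun i : ℕ+ => ∑' j : ℕ+, |Fhat a i j|))
    (β ρ c : ℝ) (hβ : 0 < β) (hρ : 0 < ρ) (hc : 0 < c) (hβcρ : c * ρ < β)
    -- (i) β-separability
    (αbar : ℕ+ → ℝ) (hαbarsum : Summable fun i : ℕ+ => |αbar i|)
    (hαbarnorm : (∑' i : ℕ+, |αbar i|) = 1)
    (hsep : ∀ s ∈ Set.Icc (-1 : ℝ) 1, ∀ a : Act,
      β ≤ ∑' i : ℕ+, αbar i * ∑' j : ℕ+, F a i j * φ j s)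
    -- (ii) Lipschitz continuity of the Bellman criterion
    (hlip : ∀ α : ℕ+ → ℝ, (Summable fun i : ℕ+ => |α i|) → ∀ a : Act,
      ∀ s ∈ Set.Icc (-1 : ℝ) 1, ∀ t ∈ Set.Icc (-1 : ℝ) 1,
        |(∑' i : ℕ+, α i * ∑' j : ℕ+, F a i j * φ j s) -
            ∑' i : ℕ+, α i * ∑' j : ℕ+, F a i j * φ j t|
          ≤ ρ * (∑' i : ℕ+, |α i|) * |s - t|)
    -- (iii) estimation error
    (herr : ∀ a : Act,
      (⨆ i : ℕ+, ∑' j : ℕ+, |Fhat a i j - F a i j|) ≤ (β - c * ρ) / 2)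
    -- (iv) covering set
    (Sbar : Set ℝ) (hSsub : Sbar ⊆ Set.Icc (-1 : ℝ) 1)
    (hcover : ∀ s ∈ Set.Icc (-1 : ℝ) 1, ∃ sb ∈ Sbar, |s - sb| < c) :
    ∀ αhat : ℕ+ → ℝ,
      (Summable fun i : ℕ+ => |αhat i|) →
      (∀ sb ∈ Sbar, ∀ a : Act,
        1 ≤ ∑' i : ℕ+, αhat i * ∑' j : ℕ+, Fhat a i j * φ j sb) →
      (∀ α : ℕ+ → ℝ, (Summable fun i : ℕ+ => |α i|) →
        (∀ sb ∈ Sbar, ∀ a : Act,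
          1 ≤ ∑' i : ℕ+, α i * ∑' j : ℕ+, Fhat a i j * φ j sb) →
        (∑' i : ℕ+, |αhat i|) ≤ ∑' i : ℕ+, |α i|) →
      ∀ s ∈ Set.Icc (-1 : ℝ) 1, ∀ a : Act,
        0 < ∑' i : ℕ+, αhat i * ∑' j : ℕ+, F a i j * φ j s := by
  intro αhat hαhatsum hfeas hmin s hs a
  have hεpos : (0:ℝ) < (β - c * ρ) / 2 := by linarith
  -- summability of inner sums
  have hSF : ∀ (b : Act) (t : ℝ), t ∈ Set.Icc (-1:ℝ) 1 → ∀ i : ℕ+,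
      Summable fun j : ℕ+ => F b i j * φ j t := by
    intro b t ht i
    refine Summable.of_norm_bounded (hFsum b i) fun j => ?_
    simp only [Real.norm_eq_abs, abs_mul]
    exact mul_le_of_le_one_right (abs_nonneg _) (hbdd j t ht)
  have hSFhat : ∀ (b : Act) (t : ℝ), t ∈ Set.Icc (-1:ℝ) 1 → ∀ i : ℕ+,
      Summable fun j : ℕ+ => Fhat b i j * φ j t := by
    intro b t ht i
    refine Summable.of_norm_bounded (hFhatsum b i) fun j => ?_
    simp only [Real.norm_eq_abs, abs_mul]
    exact mul_le_of_le_one_right (abs_nonneg _) (hbdd j t ht)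
  have hdiffsum : ∀ (b : Act) (i : ℕ+), Summable fun j : ℕ+ => |Fhat b i j - F b i j| := by
    intro b i
    refine Summable.of_norm_bounded ((hFhatsum b i).add (hFsum b i)) fun j => ?_
    simp only [Real.norm_eq_abs, abs_abs]
    exact abs_sub (Fhat b i j) (F b i j)
  have hdiffbdd : ∀ b : Act, BddAbove (Set.range fun i : ℕ+ => ∑' j : ℕ+, |Fhat b i j - F b i j|) := by
    intro b
    obtain ⟨M1, hM1⟩ := hFbdd b
    obtain ⟨M2, hM2⟩ := hFhatbdd b
    refine ⟨M2 + M1, ?_⟩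
    rintro x ⟨i, rfl⟩
    calc (∑' j : ℕ+, |Fhat b i j - F b i j|)
        ≤ ∑' j : ℕ+, (|Fhat b i j| + |F b i j|) :=
          Summable.tsum_le_tsum (fun j => abs_sub _ _) (hdiffsum b i) ((hFhatsum b i).add (hFsum b i))
      _ = (∑' j : ℕ+, |Fhat b i j|) + ∑' j : ℕ+, |F b i j| :=
          Summable.tsum_add (hFhatsum b i) (hFsum b i)
      _ ≤ M2 + M1 := add_le_add (hM2 ⟨i, rfl⟩) (hM1 ⟨i, rfl⟩)
  -- per-row estimation error
  have hinner : ∀ (b : Act) (t : ℝ), t ∈ Set.Icc (-1:ℝ) 1 → ∀ i : ℕ+,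
      |(∑' j : ℕ+, Fhat b i j * φ j t) - ∑' j : ℕ+, F b i j * φ j t| ≤ (β - c * ρ) / 2 := by
    intro b t ht i
    rw [← Summable.tsum_sub (hSFhat b t ht i) (hSF b t ht i)]
    have hsd : Summable fun j : ℕ+ => Fhat b i j * φ j t - F b i j * φ j t :=
      (hSFhat b t ht i).sub (hSF b t ht i)
    have hsn : Summable fun j : ℕ+ => ‖Fhat b i j * φ j t - F b i j * φ j t‖ := by
      refine Summable.of_norm_bounded (hdiffsum b i) fun j => ?_
      simp only [Real.norm_eq_abs, abs_abs, ← sub_mul, abs_mul]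
      exact mul_le_of_le_one_right (abs_nonneg _) (hbdd j t ht)
    calc |∑' j : ℕ+, (Fhat b i j * φ j t - F b i j * φ j t)|
        ≤ ∑' j : ℕ+, ‖Fhat b i j * φ j t - F b i j * φ j t‖ := norm_tsum_le_tsum_norm hsn
      _ ≤ ∑' j : ℕ+, |Fhat b i j - F b i j| := by
          refine Summable.tsum_le_tsum (fun j => ?_) hsn (hdiffsum b i)
          simp only [Real.norm_eq_abs, ← sub_mul, abs_mul]
          exact mul_le_of_le_one_right (abs_nonneg _) (hbdd j t ht)
      _ ≤ ⨆ i : ℕ+, ∑' j : ℕ+, |Fhat b i j - F b i j| := le_ciSup (hdiffbdd b) i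
      _ ≤ (β - c * ρ) / 2 := herr b
  -- bounds on inner sums, and summability of outer sums
  have hinnerboundF : ∀ (b : Act), ∃ M : ℝ, ∀ (t : ℝ), t ∈ Set.Icc (-1:ℝ) 1 → ∀ i : ℕ+,
      |∑' j : ℕ+, F b i j * φ j t| ≤ M := by
    intro b
    obtain ⟨M, hM⟩ := hFbdd b
    refine ⟨M, fun t ht i => ?_⟩
    have hsn : Summable fun j : ℕ+ => ‖F b i j * φ j t‖ := by
      refine Summable.of_norm_bounded (hFsum b i) fun j => ?_
      simp only [Real.norm_eq_abs, abs_abs, abs_mul]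
      exact mul_le_of_le_one_right (abs_nonneg _) (hbdd j t ht)
    calc |∑' j : ℕ+, F b i j * φ j t| ≤ ∑' j : ℕ+, ‖F b i j * φ j t‖ := norm_tsum_le_tsum_norm hsn
      _ ≤ ∑' j : ℕ+, |F b i j| := by
          refine Summable.tsum_le_tsum (fun j => ?_) hsn (hFsum b i)
          simp only [Real.norm_eq_abs, abs_mul]
          exact mul_le_of_le_one_right (abs_nonneg _) (hbdd j t ht)
      _ ≤ M := hM ⟨i, rfl⟩
  have hinnerboundFhat : ∀ (b : Act), ∃ M : ℝ, ∀ (t : ℝ), t ∈ Set.Icc (-1:ℝ) 1 → ∀ i : ℕ+,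
      |∑' j : ℕ+, Fhat b i j * φ j t| ≤ M := by
    intro b
    obtain ⟨M, hM⟩ := hFhatbdd b
    refine ⟨M, fun t ht i => ?_⟩
    have hsn : Summable fun j : ℕ+ => ‖Fhat b i j * φ j t‖ := by
      refine Summable.of_norm_bounded (hFhatsum b i) fun j => ?_
      simp only [Real.norm_eq_abs, abs_abs, abs_mul]
      exact mul_le_of_le_one_right (abs_nonneg _) (hbdd j t ht)
    calc |∑' j : ℕ+, Fhat b i j * φ j t| ≤ ∑' j : ℕ+, ‖Fhat b i j * φ j t‖ :=
          norm_tsum_le_tsum_norm hsn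
      _ ≤ ∑' j : ℕ+, |Fhat b i j| := by
          refine Summable.tsum_le_tsum (fun j => ?_) hsn (hFhatsum b i)
          simp only [Real.norm_eq_abs, abs_mul]
          exact mul_le_of_le_one_right (abs_nonneg _) (hbdd j t ht)
      _ ≤ M := hM ⟨i, rfl⟩
  have houterF : ∀ (α : ℕ+ → ℝ), (Summable fun i : ℕ+ => |α i|) → ∀ (b : Act) (t : ℝ),
      t ∈ Set.Icc (-1:ℝ) 1 → Summable fun i : ℕ+ => α i * ∑' j : ℕ+, F b i j * φ j t := by
    intro α hα b t ht
    obtain ⟨M, hM⟩ := hinnerboundF b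
    refine Summable.of_norm_bounded (hα.mul_right M) fun i => ?_
    simp only [Real.norm_eq_abs, abs_mul]
    exact mul_le_mul_of_nonneg_left (hM t ht i) (abs_nonneg _)
  have houterFhat : ∀ (α : ℕ+ → ℝ), (Summable fun i : ℕ+ => |α i|) → ∀ (b : Act) (t : ℝ),
      t ∈ Set.Icc (-1:ℝ) 1 → Summable fun i : ℕ+ => α i * ∑' j : ℕ+, Fhat b i j * φ j t := by
    intro α hα b t ht
    obtain ⟨M, hM⟩ := hinnerboundFhat b
    refine Summable.of_norm_bounded (hα.mul_right M) fun i => ?_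
    simp only [Real.norm_eq_abs, abs_mul]
    exact mul_le_mul_of_nonneg_left (hM t ht i) (abs_nonneg _)
  -- key estimation lemma
  have hest : ∀ (α : ℕ+ → ℝ), (Summable fun i : ℕ+ => |α i|) → ∀ (b : Act) (t : ℝ),
      t ∈ Set.Icc (-1:ℝ) 1 →
      |(∑' i : ℕ+, α i * ∑' j : ℕ+, Fhat b i j * φ j t) -
          ∑' i : ℕ+, α i * ∑' j : ℕ+, F b i j * φ j t|
        ≤ (β - c * ρ) / 2 * ∑' i : ℕ+, |α i| := by
    intro α hα b t ht
    rw [← Summable.tsum_sub (houterFhat α hα b t ht) (houterF α hα b t ht)]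
    have hbnd : ∀ i : ℕ+,
        ‖α i * (∑' j : ℕ+, Fhat b i j * φ j t) - α i * ∑' j : ℕ+, F b i j * φ j t‖
          ≤ |α i| * ((β - c * ρ) / 2) := by
      intro i
      rw [← mul_sub, Real.norm_eq_abs, abs_mul]
      exact mul_le_mul_of_nonneg_left (hinner b t ht i) (abs_nonneg _)
    have hsn : Summable fun i : ℕ+ =>
        ‖α i * (∑' j : ℕ+, Fhat b i j * φ j t) - α i * ∑' j : ℕ+, F b i j * φ j t‖ :=
      Summable.of_norm_bounded (hα.mul_right _) (by simpa using hbnd)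
    calc |∑' i : ℕ+, (α i * (∑' j : ℕ+, Fhat b i j * φ j t) -
            α i * ∑' j : ℕ+, F b i j * φ j t)|
        ≤ ∑' i : ℕ+, ‖α i * (∑' j : ℕ+, Fhat b i j * φ j t) -
            α i * ∑' j : ℕ+, F b i j * φ j t‖ := norm_tsum_le_tsum_norm hsn
      _ ≤ ∑' i : ℕ+, |α i| * ((β - c * ρ) / 2) := Summable.tsum_le_tsum hbnd hsn (hα.mul_right _)
      _ = (β - c * ρ) / 2 * ∑' i : ℕ+, |α i| := by rw [tsum_mul_right, mul_comm]
  -- αhat is nonzero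
  have hN0 : 0 < ∑' i : ℕ+, |αhat i| := by
    rcases lt_or_ge 0 (∑' i : ℕ+, |αhat i|) with h | h
    · exact h
    have hz : ∀ i : ℕ+, αhat i = 0 := by
      intro i
      have h1 : |αhat i| ≤ ∑' i : ℕ+, |αhat i| :=
        Summable.le_tsum hαhatsum i fun j _ => abs_nonneg _
      have := abs_nonneg (αhat i)
      have : |αhat i| = 0 := le_antisymm (h1.trans h) this
      exact abs_eq_zero.mp this
    obtain ⟨sb, hsb, _⟩ := hcover 0 ⟨by norm_num, by norm_num⟩
    have := hfeas sb hsb a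
    simp only [hz, zero_mul, tsum_zero] at this
    linarith
  -- minimality bound via the scaled separating vector
  have hβε : (0:ℝ) < β - (β - c * ρ) / 2 := by nlinarith [mul_pos hc hρ]
  set k : ℝ := β - (β - c * ρ) / 2 with hk
  have hα'sum : Summable fun i : ℕ+ => |αbar i / k| := by
    simpa only [abs_div, abs_of_pos hβε] using hαbarsum.div_const k
  have hα'feas : ∀ sb ∈ Sbar, ∀ b : Act,
      1 ≤ ∑' i : ℕ+, (αbar i / k) * ∑' j : ℕ+, Fhat b i j * φ j sb := by
    intro sb hsb b
    have hsbI := hSsub hsb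
    have h1 : β ≤ ∑' i : ℕ+, αbar i * ∑' j : ℕ+, F b i j * φ j sb := hsep sb hsbI b
    have h2 := hest αbar hαbarsum b sb hsbI
    rw [hαbarnorm, mul_one, abs_le] at h2
    have h3 : k ≤ ∑' i : ℕ+, αbar i * ∑' j : ℕ+, Fhat b i j * φ j sb := by
      rw [hk]; linarith [h2.1]
    have h4 : (∑' i : ℕ+, (αbar i / k) * ∑' j : ℕ+, Fhat b i j * φ j sb)
        = (∑' i : ℕ+, αbar i * ∑' j : ℕ+, Fhat b i j * φ j sb) / k := by
      rw [← tsum_div_const]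
      congr 1
      ext i
      ring
    rw [h4, le_div_iff₀ hβε, one_mul]
    exact h3
  have hnormbound : (∑' i : ℕ+, |αhat i|) * k ≤ 1 := by
    have h1 := hmin (fun i => αbar i / k) hα'sum hα'feas
    have h2 : (∑' i : ℕ+, |αbar i / k|) = 1 / k := by
      simp only [abs_div, abs_of_pos hβε, tsum_div_const, hαbarnorm]
    rw [h2] at h1
    exact (le_div_iff₀ hβε).mp h1
  -- conclusion
  obtain ⟨sb, hsb, hclose⟩ := hcover s hs
  have hsbI := hSsub hsb
  set N : ℝ := ∑' i : ℕ+, |αhat i| with hNdef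
  have hfe : 1 ≤ ∑' i : ℕ+, αhat i * ∑' j : ℕ+, Fhat a i j * φ j sb := hfeas sb hsb a
  have hE := hest αhat hαhatsum a sb hsbI
  rw [abs_le, ← hNdef] at hE
  have hL := hlip αhat hαhatsum a s hs sb hsbI
  rw [abs_le, ← hNdef] at hL
  have hstrict : ρ * N * |s - sb| < ρ * N * c :=
    mul_lt_mul_of_pos_left hclose (by positivity)
  have hkey : (β - c * ρ) / 2 * N + ρ * N * c = N * k := by rw [hk]; ring
  have h1 : (1:ℝ) - (β - c * ρ) / 2 * N ≤ ∑' i : ℕ+, αhat i * ∑' j : ℕ+, F a i j * φ j sb := by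
    linarith [hE.2, hfe]
  have h2 : (1:ℝ) - (β - c * ρ) / 2 * N - ρ * N * |s - sb|
      ≤ ∑' i : ℕ+, αhat i * ∑' j : ℕ+, F a i j * φ j s := by
    linarith [hL.1, h1]
  have h3 : ρ * N * |s - sb| < ρ * N * c := hstrict
  have h4 : (β - c * ρ) / 2 * N + ρ * N * c ≤ 1 := by rw [hkey]; exact hnormbound
  linarith [h2, h3, h4]
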